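/- Suppose I ≥ 2, let 0 < ε ≤ M, set the step size η = ε/M² and the number of rounds T = ⌈2·M²·ln(I)/ε²⌉, and run the Hedge algorithm where in every round t ∈ {1,…,T} the point θ_t is a best response to p_t (i.e. R(p_t,θ_t) = f(p_t)). Then the averaged output p̄_T = (1/T)·Σ_{t=1}^T p_t is an ε-minimax decision rule: sup_{θ∈Θ} R(p̄_T,θ) ≤ v̄ + ε, where v̄ = inf_{p∈Δ} sup_{θ∈Θ} R(p,θ). -/

import Mathlib

open Finset

private lemma exp_neg_quad_bound {x : ℝ} (hx : 0 ≤ x) :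
    Real.exp (-x) ≤ 1 - x + x ^ 2 / 2 := by
  have h1 : 1 + x + x ^ 2 / 2 ≤ Real.exp x := by
    have := Real.sum_le_exp_of_nonneg hx 3
    simp [Finset.sum_range_succ] at this
    nlinarith [this]
  have h2 : Real.exp (-x) * Real.exp x = 1 := by
    rw [← Real.exp_add]; simp
  nlinarith [Real.exp_pos (-x), Real.exp_pos x, sq_nonneg x, sq_nonneg (x ^ 2)]

/-- ε-minimax via Hedge: with step size `η = ε/M²` and `T = ⌈2 M² ln I / ε²⌉`
rounds, running the Hedge algorithm against best responses yields an averaged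
output `p̄_T` with `sup_θ R(p̄_T,θ) ≤ v̄ + ε`. -/
theorem hedge_eps_minimax
    (I : ℕ) (hI : 2 ≤ I) (Θ : Type*) [Nonempty Θ] (M : ℝ) (hM : 0 < M)
    (R : Fin I → Θ → ℝ) (hR : ∀ i θ, 0 ≤ R i θ ∧ R i θ ≤ M)
    (ε : ℝ) (hε0 : 0 < ε) (hεM : ε ≤ M)
    (η : ℝ) (hη : η = ε / M ^ 2)
    (T : ℕ) (hT : T = ⌈2 * M ^ 2 * Real.log I / ε ^ 2⌉₊)
    (θ : ℕ → Θ) (w : ℕ → Fin I → ℝ) (p : ℕ → Fin I → ℝ)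
    (hw0 : ∀ i, w 0 i = 1)
    (hw : ∀ t i, w (t + 1) i = w t i * Real.exp (-η * R i (θ (t + 1))))
    (hp : ∀ t i, p (t + 1) i = w t i / ∑ j, w t j)
    (hbr : ∀ t ∈ Finset.Icc 1 T,
      ∑ i, p t i * R i (θ t) = ⨆ θ' : Θ, ∑ i, p t i * R i θ') :
    (⨆ θ' : Θ, ∑ i, ((1 / (T : ℝ)) * ∑ t ∈ Finset.Icc 1 T, p t i) * R i θ')
      ≤ sInf {v : ℝ | ∃ q : Fin I → ℝ, (∀ i, 0 ≤ q i) ∧ ∑ i, q i = 1 ∧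
          v = ⨆ θ' : Θ, ∑ i, q i * R i θ'} + ε := by
  have hI1 : (1 : ℝ) < (I : ℝ) := by exact_mod_cast lt_of_lt_of_le one_lt_two hI
  have hIpos : 0 < I := by omega
  have hlnI : 0 < Real.log I := Real.log_pos hI1
  have hη0 : 0 < η := by rw [hη]; positivity
  have hTpos : 0 < T := by
    rw [hT]; rw [Nat.ceil_pos]; positivity
  have hTR : (0 : ℝ) < (T : ℝ) := by exact_mod_cast hTpos
  -- positivity of weights
  have hwpos : ∀ t i, 0 < w t i := by
    intro t
    induction t with
    | zero => intro i; rw [hw0]; norm_num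
    | succ s ih => intro i; rw [hw]; exact mul_pos (ih i) (Real.exp_pos _)
  have hWpos : ∀ t, 0 < ∑ j, w t j := fun t =>
    Finset.sum_pos (fun j _ => hwpos t j) ⟨⟨0, hIpos⟩, Finset.mem_univ _⟩
  -- properties of p
  have hp_nonneg : ∀ t i, 0 ≤ p (t + 1) i := fun t i => by
    rw [hp]; exact div_nonneg (hwpos t i).le (hWpos t).le
  have hp_sum : ∀ t, ∑ i, p (t + 1) i = 1 := fun t => by
    simp only [hp]
    rw [← Finset.sum_div, div_self (hWpos t).ne']
  -- gains
  set G : ℕ → ℝ := fun t => ∑ i, p t i * R i (θ t) with hG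
  have hc : (0:ℝ) ≤ η ^ 2 * M ^ 2 / 2 := by positivity
  -- per-step bound
  have step : ∀ t, ∑ i, w (t + 1) i ≤
      (∑ i, w t i) * Real.exp (-η * G (t + 1) + η ^ 2 * M ^ 2 / 2) := by
    intro t
    have key : ∀ i : Fin I, Real.exp (-η * R i (θ (t + 1))) ≤
        1 - η * R i (θ (t + 1)) + η ^ 2 * M ^ 2 / 2 := by
      intro i
      have h0 := (hR i (θ (t + 1))).1
      have h1 := (hR i (θ (t + 1))).2
      have hx : 0 ≤ η * R i (θ (t + 1)) := mul_nonneg hη0.le h0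
      rw [neg_mul]
      calc Real.exp (-(η * R i (θ (t + 1)))) ≤
          1 - η * R i (θ (t + 1)) + (η * R i (θ (t + 1))) ^ 2 / 2 :=
            exp_neg_quad_bound hx
        _ ≤ 1 - η * R i (θ (t + 1)) + η ^ 2 * M ^ 2 / 2 := by
            have : (η * R i (θ (t + 1))) ^ 2 ≤ η ^ 2 * M ^ 2 := by
              rw [mul_pow]
              exact mul_le_mul_of_nonneg_left (pow_le_pow_left₀ h0 h1 2) (by positivity)
            linarith
    have expand : ∑ i, w (t + 1) i
        = (∑ j, w t j) * ∑ i, p (t + 1) i * Real.exp (-η * R i (θ (t + 1))) := by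
      rw [Finset.mul_sum]
      refine Finset.sum_congr rfl fun i _ => ?_
      rw [hw, hp]
      field_simp
      rw [mul_div_cancel_right₀ _ (hWpos t).ne']
    rw [expand]
    apply mul_le_mul_of_nonneg_left _ (hWpos t).le
    calc ∑ i, p (t + 1) i * Real.exp (-η * R i (θ (t + 1)))
        ≤ ∑ i, p (t + 1) i * (1 - η * R i (θ (t + 1)) + η ^ 2 * M ^ 2 / 2) := by
          refine Finset.sum_le_sum fun i _ => ?_
          exact mul_le_mul_of_nonneg_left (key i) (hp_nonneg t i)
      _ = 1 - η * G (t + 1) + η ^ 2 * M ^ 2 / 2 := by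
          have hre : ∀ i : Fin I, p (t + 1) i * (1 - η * R i (θ (t + 1)) + η ^ 2 * M ^ 2 / 2)
              = p (t + 1) i - η * (p (t + 1) i * R i (θ (t + 1)))
                + p (t + 1) i * (η ^ 2 * M ^ 2 / 2) := fun i => by ring
          simp only [hre]
          rw [Finset.sum_add_distrib, Finset.sum_sub_distrib, hp_sum t, ← Finset.mul_sum,
            ← Finset.sum_mul, hp_sum t, one_mul]
      _ ≤ Real.exp (-η * G (t + 1) + η ^ 2 * M ^ 2 / 2) := by
          have := Real.add_one_le_exp (-η * G (t + 1) + η ^ 2 * M ^ 2 / 2)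
          linarith
  -- telescoped bound
  have tele : ∀ t : ℕ, ∑ i, w t i ≤
      (I : ℝ) * Real.exp (-η * ∑ s ∈ Finset.Icc 1 t, G s + t * (η ^ 2 * M ^ 2 / 2)) := by
    intro t
    induction t with
    | zero => simp [hw0]
    | succ s ih =>
      calc ∑ i, w (s + 1) i
          ≤ (∑ i, w s i) * Real.exp (-η * G (s + 1) + η ^ 2 * M ^ 2 / 2) := step s
        _ ≤ ((I : ℝ) * Real.exp (-η * ∑ u ∈ Finset.Icc 1 s, G u + s * (η ^ 2 * M ^ 2 / 2)))
            * Real.exp (-η * G (s + 1) + η ^ 2 * M ^ 2 / 2) :=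
            mul_le_mul_of_nonneg_right ih (Real.exp_pos _).le
        _ = (I : ℝ) * Real.exp (-η * ∑ u ∈ Finset.Icc 1 (s + 1), G u
              + (s + 1 : ℕ) * (η ^ 2 * M ^ 2 / 2)) := by
            rw [mul_assoc, ← Real.exp_add]
            congr 2
            rw [Finset.sum_Icc_succ_top (by omega : 1 ≤ s + 1)]
            push_cast
            ring
  -- lower bound on weights
  have wformula : ∀ t i, w t i = Real.exp (-η * ∑ s ∈ Finset.Icc 1 t, R i (θ s)) := by
    intro t i
    induction t with
    | zero => simp [hw0]
    | succ s ih =>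
      rw [hw, ih, ← Real.exp_add, Finset.sum_Icc_succ_top (by omega : 1 ≤ s + 1)]
      congr 1
      ring
  -- regret bound vs any index i
  have regret : ∀ i : Fin I, -η * ∑ s ∈ Finset.Icc 1 T, R i (θ s) ≤
      Real.log I + (-η * ∑ s ∈ Finset.Icc 1 T, G s + T * (η ^ 2 * M ^ 2 / 2)) := by
    intro i
    have h1 : Real.exp (-η * ∑ s ∈ Finset.Icc 1 T, R i (θ s)) ≤
        (I : ℝ) * Real.exp (-η * ∑ s ∈ Finset.Icc 1 T, G s + T * (η ^ 2 * M ^ 2 / 2)) := by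
      calc Real.exp (-η * ∑ s ∈ Finset.Icc 1 T, R i (θ s)) = w T i := (wformula T i).symm
        _ ≤ ∑ j, w T j := Finset.single_le_sum (fun j _ => (hwpos T j).le) (Finset.mem_univ i)
        _ ≤ _ := tele T
    have h2 : (I : ℝ) = Real.exp (Real.log I) :=
      (Real.exp_log (by positivity)).symm
    rw [h2, ← Real.exp_add] at h1
    exact Real.exp_le_exp.mp h1
  -- the simplex value set is nonempty
  set S := {v : ℝ | ∃ q : Fin I → ℝ, (∀ i, 0 ≤ q i) ∧ ∑ i, q i = 1 ∧
      v = ⨆ θ' : Θ, ∑ i, q i * R i θ'} with hS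
  have hSne : S.Nonempty := by
    refine ⟨⨆ θ' : Θ, ∑ i, (fun _ : Fin I => (I : ℝ)⁻¹) i * R i θ',
      fun _ : Fin I => (I : ℝ)⁻¹, fun i => by positivity, ?_, rfl⟩
    simp [Finset.card_univ]
    rw [mul_inv_cancel₀ (by positivity)]
  rw [← sub_le_iff_le_add]
  apply le_csInf hSne
  rintro v ⟨q, hq0, hq1, hqv⟩
  rw [sub_le_iff_le_add]
  -- v is the sup for q; bound R(q,θ) ≤ v for all θ
  have hbdd : ∀ (r : Fin I → ℝ), (∀ i, 0 ≤ r i) → (∑ i, r i = 1) →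
      BddAbove (Set.range fun θ' : Θ => ∑ i, r i * R i θ') := by
    intro r hr0 hr1
    refine ⟨M, ?_⟩
    rintro x ⟨θ', rfl⟩
    calc ∑ i, r i * R i θ' ≤ ∑ i, r i * M :=
        Finset.sum_le_sum fun i _ => mul_le_mul_of_nonneg_left (hR i θ').2 (hr0 i)
      _ = M := by rw [← Finset.sum_mul, hr1, one_mul]
  have hqv' : ∀ θ' : Θ, ∑ i, q i * R i θ' ≤ v := by
    intro θ'
    rw [hqv]
    exact le_ciSup (hbdd q hq0 hq1) θ'
  -- sum over t of G t bound
  have hGsum : ∑ s ∈ Finset.Icc 1 T, G s ≤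
      T * v + Real.log I / η + T * (η * M ^ 2 / 2) := by
    -- weight regret by q
    have hq_regret : -η * ∑ i, q i * ∑ s ∈ Finset.Icc 1 T, R i (θ s) ≤
        Real.log I + (-η * ∑ s ∈ Finset.Icc 1 T, G s + T * (η ^ 2 * M ^ 2 / 2)) := by
      calc -η * ∑ i, q i * ∑ s ∈ Finset.Icc 1 T, R i (θ s)
          = ∑ i, q i * (-η * ∑ s ∈ Finset.Icc 1 T, R i (θ s)) := by
            rw [Finset.mul_sum]
            exact Finset.sum_congr rfl fun i _ => by ring
        _ ≤ ∑ i, q i * (Real.log I + (-η * ∑ s ∈ Finset.Icc 1 T, G s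
              + T * (η ^ 2 * M ^ 2 / 2))) :=
            Finset.sum_le_sum fun i _ => mul_le_mul_of_nonneg_left (regret i) (hq0 i)
        _ = _ := by rw [← Finset.sum_mul, hq1, one_mul]
    have hqL : ∑ i, q i * ∑ s ∈ Finset.Icc 1 T, R i (θ s) ≤ T * v := by
      calc ∑ i, q i * ∑ s ∈ Finset.Icc 1 T, R i (θ s)
          = ∑ s ∈ Finset.Icc 1 T, ∑ i, q i * R i (θ s) := by
            rw [Finset.sum_comm]
            exact Finset.sum_congr rfl fun i _ => by rw [Finset.mul_sum]
        _ ≤ ∑ s ∈ Finset.Icc 1 T, v := Finset.sum_le_sum fun s _ => hqv' (θ s)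
        _ = T * v := by rw [Finset.sum_const, Nat.card_Icc]; simp
    have key : η * ∑ s ∈ Finset.Icc 1 T, G s ≤
        η * (T * v) + Real.log I + T * (η ^ 2 * M ^ 2 / 2) := by
      nlinarith [hq_regret, hqL, hη0]
    rw [← mul_le_mul_iff_right₀ hη0]
    calc η * ∑ s ∈ Finset.Icc 1 T, G s
        ≤ η * (T * v) + Real.log I + T * (η ^ 2 * M ^ 2 / 2) := key
      _ = η * (T * v + Real.log I / η + T * (η * M ^ 2 / 2)) := by
          field_simp
  -- final: bound the sup
  apply ciSup_le
  intro θ'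
  -- the averaged p is a valid distribution and per-θ' bound by G t
  have hper : ∀ t ∈ Finset.Icc 1 T, ∑ i, p t i * R i θ' ≤ G t := by
    intro t ht
    have ht1 : 1 ≤ t := (Finset.mem_Icc.mp ht).1
    obtain ⟨s, rfl⟩ : ∃ s, t = s + 1 := ⟨t - 1, by omega⟩
    have h1 : ∑ i, p (s + 1) i * R i θ' ≤ ⨆ θ'' : Θ, ∑ i, p (s + 1) i * R i θ'' :=
      le_ciSup (hbdd (p (s + 1)) (hp_nonneg s) (hp_sum s)) θ'
    have h2 : G (s + 1) = ⨆ θ'' : Θ, ∑ i, p (s + 1) i * R i θ'' := hbr (s + 1) ht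
    rw [h2]
    exact h1
  calc ∑ i, ((1 / (T : ℝ)) * ∑ t ∈ Finset.Icc 1 T, p t i) * R i θ'
      = (1 / (T : ℝ)) * ∑ t ∈ Finset.Icc 1 T, ∑ i, p t i * R i θ' := by
        simp only [mul_assoc, Finset.sum_mul, ← Finset.mul_sum]
        rw [Finset.sum_comm]
    _ ≤ (1 / (T : ℝ)) * ∑ t ∈ Finset.Icc 1 T, G t := by
        apply mul_le_mul_of_nonneg_left (Finset.sum_le_sum hper) (by positivity)
    _ ≤ (1 / (T : ℝ)) * (T * v + Real.log I / η + T * (η * M ^ 2 / 2)) :=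
        mul_le_mul_of_nonneg_left hGsum (by positivity)
    _ = v + Real.log I / (η * T) + η * M ^ 2 / 2 := by
        field_simp
    _ ≤ v + ε / 2 + ε / 2 := by
        have e2 : η * M ^ 2 / 2 = ε / 2 := by rw [hη]; field_simp
        have e1 : Real.log I / (η * T) ≤ ε / 2 := by
          have hTge : 2 * M ^ 2 * Real.log I / ε ^ 2 ≤ (T : ℝ) := by
            rw [hT]; exact Nat.le_ceil _
          rw [hη]
          rw [div_le_iff₀ (by positivity)]
          have : ε / 2 * (ε / M ^ 2 * T) = (ε ^ 2 / (2 * M ^ 2)) * T := by ring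
          rw [this]
          calc Real.log I = (ε ^ 2 / (2 * M ^ 2)) * (2 * M ^ 2 * Real.log I / ε ^ 2) := by
                field_simp
            _ ≤ (ε ^ 2 / (2 * M ^ 2)) * T :=
                mul_le_mul_of_nonneg_left hTge (by positivity)
        linarith
    _ = v + ε := by ring
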